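/- Every lattice has a Minkowski reduced basis: for every positive definite real symmetric N×N matrix G there exists a unimodular integer matrix Z such that ZᵀGZ belongs to the Minkowski reduction region M. -/

import Mathlib

open Matrix

/-- The quadratic form `vᵀ G v` evaluated at an integer vector `v`. -/
def intQuadForm {N : ℕ} (G : Matrix (Fin N) (Fin N) ℝ) (v : Fin N → ℤ) : ℝ :=
  (fun i => (v i : ℝ)) ⬝ᵥ G.mulVec fun i => (v i : ℝ)

/-- The gcd condition `gcd(v_i, …, v_N) = 1`. -/
def GcdTailOne {N : ℕ} (i : Fin N) (v : Fin N → ℤ) : Prop :=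
  Finset.gcd (Finset.Ici i) v = 1

/-- The Minkowski reduction region `M`. -/
def MinkowskiRegion (N : ℕ) : Set (Matrix (Fin N) (Fin N) ℝ) :=
  {G | G.IsSymm ∧
    (∀ i : Fin N, ∀ v : Fin N → ℤ, GcdTailOne i v → G i i ≤ intQuadForm G v) ∧
    (∀ i : Fin N, ∀ h : (i : ℕ) + 1 < N, 0 ≤ G i ⟨(i : ℕ) + 1, h⟩)}

/-- A unimodular matrix: integer entries and determinant `±1`. -/
def IsUnimodular {N : ℕ} (Z : Matrix (Fin N) (Fin N) ℤ) : Prop :=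
  Z.det = 1 ∨ Z.det = -1

lemma quad_bound {N : ℕ} (G : Matrix (Fin N) (Fin N) ℝ) (hG : G.PosDef) :
    ∃ c > 0, ∀ x : Fin N → ℝ, c * ‖x‖ ^ 2 ≤ x ⬝ᵥ G.mulVec x := by
  rcases Nat.eq_zero_or_pos N with hN | hN
  · refine ⟨1, one_pos, fun x => ?_⟩
    subst hN
    have h1 : ‖x‖ = 0 := by rw [Subsingleton.elim x 0]; exact norm_zero
    rw [h1]
    simp [dotProduct]
  · haveI : Nonempty (Fin N) := ⟨⟨0, hN⟩⟩
    set f : (Fin N → ℝ) → ℝ := fun x => x ⬝ᵥ G.mulVec x with hf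
    have hcont : Continuous f := by
      unfold f
      unfold dotProduct Matrix.mulVec dotProduct
      fun_prop
    have hsph : (Metric.sphere (0 : Fin N → ℝ) 1).Nonempty := by
      refine ⟨fun _ => 1, ?_⟩
      simp [Metric.mem_sphere, dist_zero_right]
    obtain ⟨x₀, hx₀s, hx₀⟩ := (isCompact_sphere (0 : Fin N → ℝ) 1).exists_isMinOn hsph hcont.continuousOn
    have hx₀ne : x₀ ≠ 0 := by
      intro h
      have := Metric.mem_sphere.mp hx₀s
      rw [h] at this; simp at this
    refine ⟨f x₀, (by have := hG.dotProduct_mulVec_pos hx₀ne; simpa [hf] using this), fun x => ?_⟩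
    rcases eq_or_ne x 0 with rfl | hx
    · simp [hf, Matrix.mulVec, dotProduct]
    · have hnx : (0:ℝ) < ‖x‖ := norm_pos_iff.mpr hx
      set y : Fin N → ℝ := ‖x‖⁻¹ • x with hy
      have hys : y ∈ Metric.sphere (0 : Fin N → ℝ) 1 := by
        simp [hy, norm_smul, abs_of_nonneg (inv_nonneg.mpr hnx.le), inv_mul_cancel₀ hnx.ne']
      have hxy : x = ‖x‖ • y := by
        rw [hy, smul_smul, mul_inv_cancel₀ hnx.ne', one_smul]
      have key : ∀ (t : ℝ) (z : Fin N → ℝ), f (t • z) = t ^ 2 * f z := by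
        intro t z
        simp only [hf, Matrix.mulVec_smul, smul_dotProduct, dotProduct_smul,
          smul_eq_mul]
        ring
      have hfx : f x = ‖x‖ ^ 2 * f y := by
        conv_lhs => rw [hxy]
        exact key _ _
      have := hx₀ hys
      calc f x₀ * ‖x‖ ^ 2 ≤ f y * ‖x‖ ^ 2 := by
            apply mul_le_mul_of_nonneg_right this (by positivity)
        _ = f x := by rw [hfx]; ring

lemma intQuad_bound {N : ℕ} (G : Matrix (Fin N) (Fin N) ℝ) (hG : G.PosDef) :
    ∃ c > 0, ∀ v : Fin N → ℤ, ∀ i : Fin N, c * ((v i : ℝ)) ^ 2 ≤ intQuadForm G v := by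
  obtain ⟨c, hc, hb⟩ := quad_bound G hG
  refine ⟨c, hc, fun v i => ?_⟩
  have h1 := hb (fun i => (v i : ℝ))
  have h2 : |((v i : ℝ))| ≤ ‖fun i => (v i : ℝ)‖ := by
    simpa [Real.norm_eq_abs] using norm_le_pi_norm (fun i => (v i : ℝ)) i
  have h3 : ((v i : ℝ)) ^ 2 ≤ ‖fun i => (v i : ℝ)‖ ^ 2 := by
    rw [← sq_abs]
    exact pow_le_pow_left₀ (abs_nonneg _) h2 2
  calc c * ((v i : ℝ)) ^ 2 ≤ c * ‖fun i => (v i : ℝ)‖ ^ 2 := by nlinarith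
    _ ≤ intQuadForm G v := h1

lemma sublevel_finite {N : ℕ} (G : Matrix (Fin N) (Fin N) ℝ) (hG : G.PosDef) (B : ℝ) :
    {v : Fin N → ℤ | intQuadForm G v ≤ B}.Finite := by
  obtain ⟨c, hc, hb⟩ := intQuad_bound G hG
  set M : ℤ := ⌈max 1 (B / c)⌉
  have key : ∀ v ∈ {v : Fin N → ℤ | intQuadForm G v ≤ B}, ∀ i, v i ∈ Set.Icc (-M) M := by
    intro v hv i
    have h1 : c * ((v i : ℝ)) ^ 2 ≤ B := (hb v i).trans hv
    have h2 : ((v i : ℝ)) ^ 2 ≤ B / c := by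
      rw [le_div_iff₀ hc]; linarith [mul_comm c (((v i : ℝ)) ^ 2)]
    have h3 : |(v i : ℝ)| ≤ max 1 (B / c) := by
      rcases le_or_gt (|(v i : ℝ)|) 1 with h | h
      · exact h.trans (le_max_left _ _)
      · have : |(v i : ℝ)| ≤ |(v i : ℝ)| ^ 2 := by nlinarith
        rw [sq_abs] at this
        exact (this.trans h2).trans (le_max_right _ _)
    have h4 : |(v i : ℝ)| ≤ (M : ℝ) := h3.trans (Int.le_ceil _)
    have h5 : |v i| ≤ M := by exact_mod_cast (by simpa [Int.cast_abs] using h4 : ((|v i| : ℤ) : ℝ) ≤ (M : ℝ))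
    rw [abs_le] at h5
    exact ⟨h5.1, h5.2⟩
  have : {v : Fin N → ℤ | intQuadForm G v ≤ B} ⊆ Set.pi Set.univ (fun _ => Set.Icc (-M) M) := by
    intro v hv
    rw [Set.mem_pi]
    exact fun i _ => key v hv i
  exact Set.Finite.subset (Set.Finite.pi (fun _ => Set.finite_Icc _ _)) this

lemma exists_min_quad {N : ℕ} (G : Matrix (Fin N) (Fin N) ℝ) (hG : G.PosDef)
    (S : Set (Fin N → ℤ)) (hS : S.Nonempty) :
    ∃ v ∈ S, ∀ w ∈ S, intQuadForm G v ≤ intQuadForm G w := by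
  obtain ⟨v₀, hv₀⟩ := hS
  have hfin : {v | v ∈ S ∧ intQuadForm G v ≤ intQuadForm G v₀}.Finite :=
    (sublevel_finite G hG (intQuadForm G v₀)).subset (fun v hv => hv.2)
  have hne : hfin.toFinset.Nonempty := ⟨v₀, by simp [hv₀]⟩
  obtain ⟨v, hv, hmin⟩ := Finset.exists_min_image hfin.toFinset (intQuadForm G) hne
  rw [Set.Finite.mem_toFinset] at hv
  refine ⟨v, hv.1, fun w hw => ?_⟩
  rcases le_or_gt (intQuadForm G w) (intQuadForm G v₀) with h | h
  · exact hmin w (by rw [Set.Finite.mem_toFinset]; exact ⟨hw, h⟩)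
  · exact (hmin v₀ (by rw [Set.Finite.mem_toFinset]; exact ⟨hv₀, le_refl _⟩)).trans h.le


lemma isUnimodular_iff {N : ℕ} (Z : Matrix (Fin N) (Fin N) ℤ) :
    IsUnimodular Z ↔ IsUnit Z.det := Int.isUnit_iff.symm

lemma IsUnimodular.mul {N : ℕ} {A B : Matrix (Fin N) (Fin N) ℤ}
    (hA : IsUnimodular A) (hB : IsUnimodular B) : IsUnimodular (A * B) := by
  rw [isUnimodular_iff] at *
  rw [Matrix.det_mul]
  exact hA.mul hB

lemma isUnimodular_one {N : ℕ} : IsUnimodular (1 : Matrix (Fin N) (Fin N) ℤ) := by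
  left; simp

/-- `E` fixes the standard basis vectors before `i`. -/
def FixHead {N : ℕ} (i : Fin N) (E : Matrix (Fin N) (Fin N) ℤ) : Prop :=
  ∀ j : Fin N, j < i → E.mulVec (Pi.single j 1) = Pi.single j 1

lemma FixHead.mul {N : ℕ} {i : Fin N} {A B : Matrix (Fin N) (Fin N) ℤ}
    (hA : FixHead i A) (hB : FixHead i B) : FixHead i (A * B) := by
  intro j hj
  rw [← Matrix.mulVec_mulVec, hB j hj, hA j hj]

lemma fixHead_one {N : ℕ} (i : Fin N) : FixHead i (1 : Matrix (Fin N) (Fin N) ℤ) := by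
  intro j hj; exact Matrix.one_mulVec _

lemma transvection_mulVec {N : ℕ} (k l : Fin N) (c : ℤ) (v : Fin N → ℤ) :
    (Matrix.transvection k l c).mulVec v = fun r => if r = k then v k + c * v l else v r := by
  ext r
  rw [Matrix.transvection, Matrix.add_mulVec, Matrix.one_mulVec, Matrix.single_mulVec]
  by_cases h : r = k <;> simp [h, Function.update, mul_comm]

lemma transvection_fixHead {N : ℕ} {i : Fin N} {k l : Fin N} (hl : i ≤ l) (c : ℤ) :
    FixHead i (Matrix.transvection k l c) := by
  intro j hj
  rw [transvection_mulVec]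
  ext r
  have hjl : j ≠ l := fun h => absurd (h ▸ hj) (not_lt.mpr hl)
  by_cases h : r = k
  · subst h
    simp [Pi.single_apply, Ne.symm hjl]
  · simp [h]

lemma transvection_unimodular {N : ℕ} {k l : Fin N} (hkl : k ≠ l) (c : ℤ) :
    IsUnimodular (Matrix.transvection k l c) := by
  left; exact Matrix.det_transvection_of_ne k l hkl c

/-- sign flip matrix -/
def flipAt {N : ℕ} (k : Fin N) : Matrix (Fin N) (Fin N) ℤ :=
  Matrix.diagonal (fun x => if x = k then -1 else 1)

lemma flipAt_unimodular {N : ℕ} (k : Fin N) : IsUnimodular (flipAt k) := by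
  right
  rw [flipAt, Matrix.det_diagonal]
  rw [Finset.prod_ite_eq' Finset.univ k (fun _ => (-1 : ℤ))]
  simp

lemma flipAt_mulVec {N : ℕ} (k : Fin N) (v : Fin N → ℤ) :
    (flipAt k).mulVec v = fun r => if r = k then -(v r) else v r := by
  ext r
  rw [flipAt, Matrix.mulVec_diagonal]
  by_cases h : r = k <;> simp [h]

lemma flipAt_fixHead {N : ℕ} {i k : Fin N} (hk : i ≤ k) : FixHead i (flipAt k) := by
  intro j hj
  rw [flipAt_mulVec]
  ext r
  have hjk : j ≠ k := fun h => absurd (h ▸ hj) (not_lt.mpr hk)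
  by_cases h : r = k
  · subst h
    simp [Pi.single_apply, Ne.symm hjk]
  · simp [h]

lemma phase1 {N : ℕ} (i : Fin N) :
    ∀ n (v : Fin N → ℤ), Finset.gcd (Finset.Ici i) v = 1 →
      (∑ j ∈ Finset.Ici i, (v j).natAbs) = n →
      ∃ E : Matrix (Fin N) (Fin N) ℤ, IsUnimodular E ∧ FixHead i E ∧
        (E.mulVec v) i = 1 ∧ ∀ j ∈ Finset.Ici i, j ≠ i → (E.mulVec v) j = 0 := by
  intro n
  induction n using Nat.strong_induction_on with
  | _ n IH =>
  intro v hgcd hsum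
  have hiS : i ∈ Finset.Ici i := Finset.mem_Ici.mpr le_rfl
  set T := (Finset.Ici i).filter (fun j => v j ≠ 0) with hT
  have hTne : T.Nonempty := by
    by_contra h
    rw [Finset.not_nonempty_iff_eq_empty] at h
    have hall : ∀ j ∈ Finset.Ici i, v j = 0 := by
      intro j hj
      by_contra hv
      have : j ∈ T := Finset.mem_filter.mpr ⟨hj, hv⟩
      rw [h] at this
      exact absurd this (Finset.notMem_empty j)
    rw [Finset.gcd_eq_zero_iff.mpr hall] at hgcd
    exact absurd hgcd (by norm_num)
  obtain ⟨l, hlT, hlmin⟩ := Finset.exists_min_image T (fun j => (v j).natAbs) hTne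
  have hlS : l ∈ Finset.Ici i := (Finset.mem_filter.mp hlT).1
  have hvl : v l ≠ 0 := (Finset.mem_filter.mp hlT).2
  have hil : i ≤ l := Finset.mem_Ici.mp hlS
  by_cases hsing : ∀ j ∈ Finset.Ici i, j ≠ l → v j = 0
  · -- Case A : single nonzero tail entry at l
    have hdvd : v l ∣ 1 := by
      rw [← hgcd]
      apply Finset.dvd_gcd
      intro b hb
      by_cases hbl : b = l
      · subst hbl; exact dvd_refl _
      · rw [hsing b hb hbl]; exact dvd_zero _
    have hunit : v l = 1 ∨ v l = -1 := Int.isUnit_iff.mp (isUnit_of_dvd_one hdvd)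
    set E₁ : Matrix (Fin N) (Fin N) ℤ := if v l = 1 then 1 else flipAt l with hE₁
    have hE₁u : IsUnimodular E₁ := by
      by_cases h : v l = 1 <;> simp [hE₁, h, isUnimodular_one, flipAt_unimodular]
    have hE₁f : FixHead i E₁ := by
      by_cases h : v l = 1 <;> simp [hE₁, h, fixHead_one, flipAt_fixHead hil]
    have hw : ∀ j, (E₁.mulVec v) j = if j = l then 1 else v j := by
      intro j
      rcases hunit with h1 | h1
      · rw [hE₁, if_pos h1, Matrix.one_mulVec]
        by_cases hj : j = l
        · subst hj; simp [h1]
        · simp [hj]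
      · rw [hE₁, if_neg (by rw [h1]; norm_num), flipAt_mulVec]
        by_cases hj : j = l
        · subst hj; simp [h1]
        · simp [hj]
    by_cases hli : l = i
    · refine ⟨E₁, hE₁u, hE₁f, ?_, ?_⟩
      · rw [hw]; simp [hli]
      · intro j hj hji
        rw [hw, if_neg (by rw [hli]; exact hji), hsing j hj (by rw [hli]; exact hji)]
    · -- l ≠ i : move the unit from l to i
      have hil' : i < l := lt_of_le_of_ne hil (fun h => hli h.symm)
      set w := E₁.mulVec v with hwdef
      set E₂ := Matrix.transvection i l (1 - w i) with hE₂
      set w₂ := E₂.mulVec w with hw₂def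
      have hw₂ : ∀ j, w₂ j = if j = i then 1 else w j := by
        intro j
        rw [hw₂def, hE₂, transvection_mulVec]
        by_cases hj : j = i
        · simp only [hj, if_pos rfl]
          rw [hw l, if_pos rfl]; ring
        · simp [hj]
      set E₃ := Matrix.transvection l i (-1) with hE₃
      refine ⟨E₃ * (E₂ * E₁), ((transvection_unimodular (fun h => hli h) (-1)).mul
        (((transvection_unimodular (fun h => hli (h.symm)) _).mul hE₁u))),
        ((transvection_fixHead le_rfl _).mul ((transvection_fixHead hil _).mul hE₁f)), ?_, ?_⟩
      · rw [← Matrix.mulVec_mulVec, ← Matrix.mulVec_mulVec, ← hwdef, ← hw₂def, hE₃,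
          transvection_mulVec]
        simp only [if_neg hli]
        rw [if_neg (fun h : i = l => hli h.symm), hw₂ i, if_pos rfl]
      · intro j hj hji
        rw [← Matrix.mulVec_mulVec, ← Matrix.mulVec_mulVec, ← hwdef, ← hw₂def, hE₃,
          transvection_mulVec]
        by_cases hjl : j = l
        · simp only [hjl, if_pos rfl]
          rw [hw₂ l, if_neg hli, hw l, if_pos rfl, hw₂ i, if_pos rfl]
          simp
        · simp only [if_neg hjl]
          rw [hw₂ j, if_neg hji, hw j, if_neg hjl]
          exact hsing j hj hjl
  · -- Case B : at least two nonzero tail entries; reduce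
    push_neg at hsing
    obtain ⟨k, hkS, hkl, hvk⟩ := hsing
    set q := v k / v l with hq
    set E₁ := Matrix.transvection k l (-q) with hE₁
    set w := E₁.mulVec v with hwdef
    have hwk : w k = v k % v l := by
      have h1 : w k = v k + -q * v l := by
        rw [hwdef, hE₁, transvection_mulVec]
        simp
      rw [h1, Int.emod_def, hq]; ring
    have hwo : ∀ j, j ≠ k → w j = v j := by
      intro j hj
      rw [hwdef, hE₁, transvection_mulVec]
      simp [hj]
    have hvkw : v k = w k + q * w l := by
      rw [hwk, hwo l (Ne.symm hkl), Int.emod_def, hq]; ring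
    have hg2 : Finset.gcd (Finset.Ici i) w ∣ 1 := by
      rw [← hgcd]
      apply Finset.dvd_gcd
      intro b hb
      by_cases hbk : b = k
      · subst hbk
        rw [hvkw]
        exact dvd_add (Finset.gcd_dvd hb) ((Finset.gcd_dvd hlS).mul_left q)
      · rw [← hwo b hbk]
        exact Finset.gcd_dvd hb
    have hg3 : Finset.gcd (Finset.Ici i) w = 1 := by
      rw [← Finset.normalize_gcd]
      exact normalize_eq_one.mpr (isUnit_of_dvd_one hg2)
    have hrlt : (w k).natAbs < (v k).natAbs := by
      have h1 : 0 ≤ v k % v l := Int.emod_nonneg _ hvl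
      have h2 : v k % v l < |v l| := Int.emod_lt_abs _ hvl
      have h3 : (v l).natAbs ≤ (v k).natAbs :=
        hlmin k (Finset.mem_filter.mpr ⟨hkS, hvk⟩)
      rw [hwk]
      rw [Int.abs_eq_natAbs] at h2
      omega
    have hsum2 : (∑ j ∈ Finset.Ici i, (w j).natAbs) < n := by
      rw [← hsum]
      refine Finset.sum_lt_sum (fun j hj => ?_) ⟨k, hkS, hrlt⟩
      by_cases hjk : j = k
      · subst hjk; exact hrlt.le
      · rw [hwo j hjk]
    obtain ⟨E', hu, hf, h1, h0⟩ := IH _ hsum2 w hg3 rfl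
    refine ⟨E' * E₁, hu.mul (transvection_unimodular hkl _),
      hf.mul (transvection_fixHead hil _), ?_, ?_⟩
    · rw [← Matrix.mulVec_mulVec, ← hwdef]; exact h1
    · intro j hj hji
      rw [← Matrix.mulVec_mulVec, ← hwdef]
      exact h0 j hj hji

lemma phase2 {N : ℕ} (i : Fin N) (w : Fin N → ℤ) (hwi : w i = 1)
    (hw0 : ∀ j ∈ Finset.Ici i, j ≠ i → w j = 0) :
    ∃ E : Matrix (Fin N) (Fin N) ℤ, IsUnimodular E ∧ FixHead i E ∧
      E.mulVec w = Pi.single i 1 := by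
  set E : Matrix (Fin N) (Fin N) ℤ :=
    Matrix.of (fun k l => if k = l then 1 else if l = i ∧ k < i then -(w k) else 0) with hE
  have hentry : ∀ k l, E k l = if k = l then 1 else if l = i ∧ k < i then -(w k) else 0 :=
    fun _ _ => rfl
  have htri : E.BlockTriangular id := by
    intro a b hab
    rw [hentry, if_neg, if_neg]
    · rintro ⟨rfl, h2⟩
      exact absurd (hab.trans h2) (lt_irrefl _)
    · rintro rfl
      exact absurd hab (lt_irrefl _)
  have hdet : E.det = 1 := by
    rw [Matrix.det_of_upperTriangular htri]
    exact Finset.prod_eq_one (fun x _ => by rw [hentry, if_pos rfl])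
  refine ⟨E, Or.inl hdet, ?_, ?_⟩
  · intro j hj
    have hcol : E.mulVec (Pi.single j 1) = fun r => E r j := by
      ext r
      rw [Matrix.mulVec_single]
      exact mul_one _
    rw [hcol]
    ext r
    rw [hentry]
    by_cases hrj : r = j
    · subst hrj
      rw [if_pos rfl, Pi.single_eq_same]
    · rw [if_neg hrj, if_neg]
      · simp [Pi.single_apply, hrj]
      · rintro ⟨rfl, _⟩
        exact absurd hj (lt_irrefl _)
  · ext r
    by_cases hri : r = i
    · subst hri
      have : (E.mulVec w) r = E r r * w r := by
        rw [Matrix.mulVec, dotProduct]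
        refine Finset.sum_eq_single r (fun x _ hx => ?_) (fun h => absurd (Finset.mem_univ r) h)
        rw [hentry, if_neg (fun h => hx h.symm), if_neg, zero_mul]
        rintro ⟨rfl, h2⟩
        exact absurd h2 (lt_irrefl _)
      rw [this, hentry, if_pos rfl, one_mul, hwi, Pi.single_eq_same]
    · rw [Pi.single_eq_of_ne (by exact fun h => hri h) 1]
      by_cases hlt : r < i
      · have hsum : (E.mulVec w) r = ∑ x ∈ ({r, i} : Finset (Fin N)), E r x * w x := by
          rw [Matrix.mulVec, dotProduct]
          refine (Finset.sum_subset (Finset.subset_univ _) (fun x _ hx => ?_)).symm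
          simp only [Finset.mem_insert, Finset.mem_singleton, not_or] at hx
          rw [hentry, if_neg (fun h => hx.1 h.symm), if_neg (fun h => hx.2 h.1), zero_mul]
        rw [hsum, Finset.sum_pair hri]
        rw [hentry, if_pos rfl, hentry, if_neg hri, if_pos ⟨rfl, hlt⟩, hwi]
        ring
      · have : (E.mulVec w) r = E r r * w r := by
          rw [Matrix.mulVec, dotProduct]
          refine Finset.sum_eq_single r (fun x _ hx => ?_) (fun h => absurd (Finset.mem_univ r) h)
          rw [hentry, if_neg (fun h => hx h.symm), if_neg, zero_mul]
          rintro ⟨rfl, h2⟩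
          exact absurd h2 hlt
        rw [this, hentry, if_pos rfl, one_mul]
        exact hw0 r (Finset.mem_Ici.mpr (not_lt.mp hlt)) hri

lemma exists_unimodular_cols {N : ℕ} (i : Fin N) (v : Fin N → ℤ)
    (h : Finset.gcd (Finset.Ici i) v = 1) :
    ∃ U : Matrix (Fin N) (Fin N) ℤ, IsUnimodular U ∧
      (∀ j : Fin N, j < i → (fun r => U r j) = Pi.single j 1) ∧
      (fun r => U r i) = v := by
  obtain ⟨E₁, hu₁, hf₁, hei, he0⟩ := phase1 i _ v h rfl
  obtain ⟨E₂, hu₂, hf₂, hred⟩ := phase2 i (E₁.mulVec v) hei he0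
  set E := E₂ * E₁ with hEdef
  have hu : IsUnimodular E := hu₂.mul hu₁
  have hf : FixHead i E := hf₂.mul hf₁
  have hEv : E.mulVec v = Pi.single i 1 := by
    rw [hEdef, ← Matrix.mulVec_mulVec, hred]
  have hdet : IsUnit E.det := (isUnimodular_iff E).mp hu
  set U := E⁻¹ with hU
  have hEU : E * U = 1 := Matrix.mul_nonsing_inv E hdet
  have hUE : U * E = 1 := Matrix.nonsing_inv_mul E hdet
  have hinj : ∀ x y : Fin N → ℤ, E.mulVec x = E.mulVec y → x = y := by
    intro x y hxy
    have := congrArg U.mulVec hxy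
    rwa [Matrix.mulVec_mulVec, Matrix.mulVec_mulVec, hUE, Matrix.one_mulVec,
      Matrix.one_mulVec] at this
  have hUdet : IsUnimodular U := by
    rw [isUnimodular_iff]
    have : E.det * U.det = 1 := by rw [← Matrix.det_mul, hEU, Matrix.det_one]
    exact IsUnit.of_mul_eq_one _ ((mul_comm E.det U.det) ▸ this)
  have hcol : ∀ j : Fin N, (fun r => U r j) = U.mulVec (Pi.single j 1) := by
    intro j
    ext r
    simp [Matrix.mulVec_single]
  refine ⟨U, hUdet, ?_, ?_⟩
  · intro j hj
    rw [hcol j]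
    apply hinj
    rw [Matrix.mulVec_mulVec, hEU, Matrix.one_mulVec]
    exact (hf j hj).symm
  · rw [hcol i]
    apply hinj
    rw [Matrix.mulVec_mulVec, hEU, Matrix.one_mulVec, hEv]


section MinSet
variable {N : ℕ} (G : Matrix (Fin N) (Fin N) ℝ)

/-- quadratic form of the `k`-th column (or `0` out of range). -/
noncomputable def colQ (Z : Matrix (Fin N) (Fin N) ℤ) (k : ℕ) : ℝ :=
  if h : k < N then intQuadForm G (fun r => Z r ⟨k, h⟩) else 0

/-- iterated greedy minimization sets -/
def MinSet : ℕ → Set (Matrix (Fin N) (Fin N) ℤ)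
  | 0 => {Z | IsUnimodular Z}
  | (k+1) => {Z | Z ∈ MinSet k ∧ ∀ Z' ∈ MinSet k, colQ G Z k ≤ colQ G Z' k}

lemma minset_unimod : ∀ k (Z : Matrix (Fin N) (Fin N) ℤ), Z ∈ MinSet G k → IsUnimodular Z := by
  intro k
  induction k with
  | zero => exact fun Z h => h
  | succ k ih => exact fun Z h => ih Z h.1

lemma minset_anti : ∀ {k m : ℕ}, k ≤ m → MinSet G m ⊆ MinSet G k := by
  intro k m h
  induction m with
  | zero => rw [Nat.le_zero.mp h]
  | succ m ih =>
      rcases Nat.eq_or_lt_of_le h with h1 | h1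
      · rw [h1]
      · exact fun Z hZ => ih (Nat.lt_succ_iff.mp h1) hZ.1

lemma minset_nonempty (hG : G.PosDef) : ∀ k, (MinSet G k).Nonempty := by
  intro k
  induction k with
  | zero => exact ⟨1, isUnimodular_one⟩
  | succ k ih =>
      obtain ⟨Z₀, hZ₀⟩ := ih
      by_cases h : k < N
      · set S : Set (Fin N → ℤ) := {v | ∃ Z ∈ MinSet G k, v = fun r => Z r ⟨k, h⟩} with hS
        have hSne : S.Nonempty := ⟨_, Z₀, hZ₀, rfl⟩
        obtain ⟨v, ⟨Z, hZ, hv⟩, hmin⟩ := exists_min_quad G hG S hSne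
        refine ⟨Z, hZ, fun Z' hZ' => ?_⟩
        rw [colQ, colQ, dif_pos h, dif_pos h, ← hv]
        exact hmin _ ⟨Z', hZ', rfl⟩
      · refine ⟨Z₀, hZ₀, fun Z' _ => ?_⟩
        rw [colQ, colQ, dif_neg h, dif_neg h]

lemma minset_replace : ∀ k (Z Z' : Matrix (Fin N) (Fin N) ℤ), Z ∈ MinSet G k →
    IsUnimodular Z' → (∀ c : Fin N, (c : ℕ) < k → ∀ r, Z' r c = Z r c) →
    Z' ∈ MinSet G k := by
  intro k
  induction k with
  | zero => exact fun Z Z' _ h2 _ => h2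
  | succ k ih =>
      intro Z Z' hZ hZ' hcols
      have h1 : Z' ∈ MinSet G k :=
        ih Z Z' hZ.1 hZ' (fun c hc r => hcols c (Nat.lt_succ_of_lt hc) r)
      have h2 : colQ G Z' k = colQ G Z k := by
        rw [colQ, colQ]
        by_cases h : k < N
        · rw [dif_pos h, dif_pos h]
          congr 1
          ext r
          exact hcols ⟨k, h⟩ (Nat.lt_succ_self k) r
        · rw [dif_neg h, dif_neg h]
      exact ⟨h1, fun Z'' hZ'' => h2 ▸ hZ.2 Z'' hZ''⟩

end MinSet

section Transfer
variable {N : ℕ}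

lemma castVec_mulVec (W : Matrix (Fin N) (Fin N) ℤ) (v : Fin N → ℤ) :
    (fun r => ((W.mulVec v) r : ℝ)) =
      (W.map (Int.cast : ℤ → ℝ)).mulVec (fun i => (v i : ℝ)) := by
  ext r
  simp only [Matrix.mulVec, dotProduct, Matrix.map_apply]
  push_cast
  rfl

lemma quad_transfer (G : Matrix (Fin N) (Fin N) ℝ) (W : Matrix (Fin N) (Fin N) ℤ)
    (v : Fin N → ℤ) :
    intQuadForm ((W.map (Int.cast : ℤ → ℝ))ᵀ * G * W.map (Int.cast : ℤ → ℝ)) v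
      = intQuadForm G (W.mulVec v) := by
  unfold intQuadForm
  rw [castVec_mulVec]
  set A := W.map (Int.cast : ℤ → ℝ)
  set x : Fin N → ℝ := fun i => (v i : ℝ)
  rw [← Matrix.mulVec_mulVec, ← Matrix.mulVec_mulVec, Matrix.dotProduct_mulVec,
    Matrix.vecMul_transpose]

lemma quad_single (H : Matrix (Fin N) (Fin N) ℝ) (i : Fin N) :
    intQuadForm H (Pi.single i 1) = H i i := by
  unfold intQuadForm
  simp [Matrix.mulVec, dotProduct, Pi.single_apply, Finset.mul_sum,
    mul_ite, ite_mul, Finset.sum_ite_eq']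

lemma quad_smulcol (G : Matrix (Fin N) (Fin N) ℝ) (v : Fin N → ℤ) (t : ℤ) :
    intQuadForm G (fun r => v r * t) = (t : ℝ)^2 * intQuadForm G v := by
  have hx : (fun i => ((v i * t : ℤ) : ℝ)) = (t : ℝ) • (fun i => (v i : ℝ)) := by
    ext i; push_cast; simp [mul_comm]
  unfold intQuadForm
  rw [hx, Matrix.mulVec_smul, smul_dotProduct, dotProduct_smul,
    smul_eq_mul, smul_eq_mul]
  ring

end Transfer


/-- every lattice has a Minkowski reduced basis: for every positive
definite real symmetric matrix `G` there is a unimodular `Z` with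
`ZᵀGZ ∈ M`. -/
theorem exists_minkowski_reduced_basis (N : ℕ)
    (G : Matrix (Fin N) (Fin N) ℝ) (hG : G.PosDef) :
    ∃ Z : Matrix (Fin N) (Fin N) ℤ, IsUnimodular Z ∧
      (Z.map (Int.cast : ℤ → ℝ))ᵀ * G * Z.map (Int.cast : ℤ → ℝ) ∈
        MinkowskiRegion N := by
  classical
  obtain ⟨Z, hZ⟩ := minset_nonempty G hG N
  set Zr := Z.map (Int.cast : ℤ → ℝ) with hZr
  set G1 := Zrᵀ * G * Zr with hG1
  set p : ℕ → ℝ := fun k =>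
    if h : k + 1 < N then G1 ⟨k, Nat.lt_of_succ_lt h⟩ ⟨k+1, h⟩ else 0 with hp
  set ε : Fin N → ℤ :=
    fun j => (-1) ^ ((Finset.range j.val).filter (fun k => p k < 0)).card with hε
  have hεpm : ∀ j, ε j = 1 ∨ ε j = -1 := by
    intro j
    rcases Nat.even_or_odd (((Finset.range j.val).filter (fun k => p k < 0)).card) with h | h
    · exact Or.inl (Even.neg_one_pow h)
    · exact Or.inr (Odd.neg_one_pow h)
  have hεsq : ∀ j, ε j * ε j = 1 := by
    intro j; rcases hεpm j with h | h <;> rw [h] <;> norm_num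
  set D := Matrix.diagonal ε with hD
  have hDu : IsUnimodular D := by
    rw [isUnimodular_iff, hD, Matrix.det_diagonal]
    refine IsUnit.of_mul_eq_one (∏ j, ε j) ?_
    rw [← Finset.prod_mul_distrib]
    exact Finset.prod_eq_one (fun j _ => hεsq j)
  set W := Z * D with hW
  have hWcol : ∀ r c, W r c = Z r c * ε c := by
    intro r c; rw [hW, hD, Matrix.mul_diagonal]
  have hWmin : ∀ k, Z ∈ MinSet G k → W ∈ MinSet G k := by
    intro k
    induction k with
    | zero => exact fun h => h.mul hDu
    | succ k ih =>
        intro h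
        refine ⟨ih h.1, fun Z' hZ' => ?_⟩
        have heq : colQ G W k = colQ G Z k := by
          rw [colQ, colQ]
          by_cases hk : k < N
          · rw [dif_pos hk, dif_pos hk]
            have hcol : (fun r => W r ⟨k, hk⟩) = fun r => Z r ⟨k, hk⟩ * ε ⟨k, hk⟩ :=
              funext (fun r => hWcol r _)
            rw [hcol, quad_smulcol]
            rcases hεpm ⟨k, hk⟩ with h1 | h1 <;> rw [h1] <;> norm_num
          · rw [dif_neg hk, dif_neg hk]
        rw [heq]
        exact h.2 Z' hZ'
  have hWN : W ∈ MinSet G N := hWmin N hZ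
  have hWu : IsUnimodular W := minset_unimod G N W hWN
  set Wr := W.map (Int.cast : ℤ → ℝ) with hWr
  have hGsym : Gᵀ = G := by
    have h1 := hG.1
    ext a b
    have h2 := congrFun (congrFun h1 a) b
    simpa [Matrix.conjTranspose_apply] using h2
  have hsym : (Wrᵀ * G * Wr).IsSymm := by
    unfold Matrix.IsSymm
    rw [Matrix.transpose_mul, Matrix.transpose_mul, Matrix.transpose_transpose, hGsym,
      ← Matrix.mul_assoc]
  refine ⟨W, hWu, hsym, ?_, ?_⟩
  · -- condition (i)
    intro i v hgcd
    obtain ⟨U, hUu, hUcols, hUcoli⟩ := exists_unimodular_cols i v hgcd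
    set Z' := W * U with hZ'def
    have hZ'u : IsUnimodular Z' := hWu.mul hUu
    have hZ'cols : ∀ c : Fin N, (c : ℕ) < (i : ℕ) → ∀ r, Z' r c = W r c := by
      intro c hc r
      rw [hZ'def, Matrix.mul_apply]
      have hcol := hUcols c (Fin.lt_def.mpr hc)
      calc ∑ x, W r x * U x c = ∑ x, W r x * (Pi.single c 1 : Fin N → ℤ) x :=
            Finset.sum_congr rfl (fun x _ => by rw [congrFun hcol x])
        _ = W r c := by simp [Pi.single_apply, mul_ite, Finset.sum_ite_eq']
    have hZ'mem : Z' ∈ MinSet G (i : ℕ) :=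
      minset_replace G (i : ℕ) W Z' (minset_anti G i.isLt.le hWN) hZ'u hZ'cols
    have hWmem : W ∈ MinSet G ((i : ℕ) + 1) := minset_anti G (Nat.succ_le_of_lt i.isLt) hWN
    have hle : colQ G W (i : ℕ) ≤ colQ G Z' (i : ℕ) := hWmem.2 Z' hZ'mem
    have e1 : colQ G W (i : ℕ) = (Wrᵀ * G * Wr) i i := by
      rw [colQ, dif_pos i.isLt]
      rw [(quad_single (Wrᵀ * G * Wr) i).symm, hWr, quad_transfer]
      congr 1
      ext r
      simp [Matrix.mulVec_single]
    have e2 : colQ G Z' (i : ℕ) = intQuadForm (Wrᵀ * G * Wr) v := by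
      rw [colQ, dif_pos i.isLt, hWr, quad_transfer]
      congr 1
      ext r
      rw [Fin.eta, hZ'def, Matrix.mul_apply, Matrix.mulVec]
      refine Finset.sum_congr rfl (fun x _ => ?_)
      rw [congrFun hUcoli x]
    rw [← e1, ← e2]
    exact hle
  · -- condition (ii)
    intro i h
    set n := (i : ℕ) with hn
    have hWrD : Wr = Zr * Matrix.diagonal (fun j => (ε j : ℝ)) := by
      ext a b
      rw [hWr, Matrix.map_apply, hWcol a b, Matrix.mul_diagonal, hZr, Matrix.map_apply]
      push_cast
      ring
    have hGW : ∀ a b : Fin N, (Wrᵀ * G * Wr) a b = (ε a : ℝ) * G1 a b * (ε b : ℝ) := by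
      have key : Wrᵀ * G * Wr
          = Matrix.diagonal (fun j => (ε j : ℝ)) * G1 * Matrix.diagonal (fun j => (ε j : ℝ)) := by
        rw [hWrD, Matrix.transpose_mul, Matrix.diagonal_transpose, hG1]
        simp only [Matrix.mul_assoc]
      intro a b
      rw [key, Matrix.mul_diagonal, Matrix.diagonal_mul]
    have hpi : p n = G1 i ⟨n + 1, h⟩ := by
      rw [hp]
      simp only []
      rw [dif_pos h]
    have hεsucc : ε ⟨n + 1, h⟩ = ε i * (if p n < 0 then -1 else 1) := by
      rw [hε]
      simp only []
      have hr : Finset.range (n + 1) = insert n (Finset.range n) := Finset.range_add_one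
      rw [hr, Finset.filter_insert]
      by_cases hpn : p n < 0
      · rw [if_pos hpn, if_pos hpn, Finset.card_insert_of_notMem (by simp)]
        rw [pow_succ]
      · rw [if_neg hpn, if_neg hpn, mul_one]
    rw [hGW]
    have hsq : (ε i : ℝ) * (ε i : ℝ) = 1 := by
      rcases hεpm i with h1 | h1 <;> rw [h1] <;> norm_num
    rw [hεsucc]
    push_cast
    rw [← hpi]
    by_cases hpn : p n < 0
    · rw [if_pos hpn]
      push_cast
      nlinarith [hsq]
    · rw [if_neg hpn]
      push_cast
      nlinarith [hsq, not_lt.mp hpn]
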